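/- Let u : [0,∞) → ℝ be differentiable and nonnegative with u'(t) ≤ -K u(t) + C u(t)^{3/2} for positive constants K, C. If u(0) < (K/(2C))², then u(t) ≤ u(0) e^{-Kt/2} for all t ≥ 0 (exponential decay for small initial data in nonlinear energy estimates). -/

import Mathlib

open Set Real

/-- exponential decay for the nonlinear differential inequality
`u' ≤ -Ku + Cu^{3/2}` when `u(0) < (K/(2C))²`. -/
theorem exp_decay_of_nonlinear_ode
    (u : ℝ → ℝ) (K C : ℝ) (hK : 0 < K) (hC : 0 < C)
    (hdiff : Differentiable ℝ u)
    (hnonneg : ∀ t, 0 ≤ t → 0 ≤ u t)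
    (hode : ∀ t, 0 ≤ t → deriv u t ≤ -K * u t + C * u t ^ ((3 : ℝ) / 2))
    (hsmall : u 0 < (K / (2 * C)) ^ 2) :
    ∀ t, 0 ≤ t → u t ≤ u 0 * Real.exp (-K * t / 2) := by
  set B := (K / (2 * C)) ^ 2 with hB
  have hKC : 0 < K / (2 * C) := div_pos hK (by positivity)
  have hsq : B ^ ((1:ℝ)/2) = K / (2 * C) := by
    rw [hB, ← Real.sqrt_eq_rpow, Real.sqrt_sq hKC.le]
  -- Grönwall on intervals where u stays below B
  have key : ∀ b : ℝ, (∀ x ∈ Ico (0:ℝ) b, u x < B) →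
      ∀ x ∈ Icc (0:ℝ) b, u x ≤ u 0 * Real.exp (-(K/2) * (x - 0)) := by
    intro b hlt
    have H := le_gronwallBound_of_liminf_deriv_right_le (f := u) (f' := deriv u)
      (δ := u 0) (K := -(K/2)) (ε := 0) (a := 0) (b := b)
      hdiff.continuous.continuousOn
      (fun x _ r hr => ((hdiff x).hasDerivAt.hasDerivWithinAt).liminf_right_slope_le hr)
      le_rfl ?_
    · intro x hx
      have := H x hx
      rwa [gronwallBound_ε0] at this
    · intro x hx
      have hx0 : (0:ℝ) ≤ x := hx.1
      have hux : 0 ≤ u x := hnonneg x hx0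
      have hxB : u x < B := hlt x hx
      have h32 : C * u x ^ ((3:ℝ)/2) ≤ (K/2) * u x := by
        rcases eq_or_lt_of_le hux with h0 | h0
        · rw [← h0, Real.zero_rpow (by norm_num)]; simp
        · have hsplit : u x ^ ((3:ℝ)/2) = u x * u x ^ ((1:ℝ)/2) := by
            rw [show (3:ℝ)/2 = 1 + 1/2 by norm_num, Real.rpow_add h0, Real.rpow_one]
          have hle : u x ^ ((1:ℝ)/2) ≤ K / (2 * C) := by
            rw [← hsq]
            exact Real.rpow_le_rpow hux hxB.le (by norm_num)
          rw [hsplit]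
          have h1 : C * u x ^ ((1:ℝ)/2) ≤ C * (K / (2 * C)) :=
            mul_le_mul_of_nonneg_left hle hC.le
          have h2 : C * (K / (2 * C)) = K / 2 := by field_simp
          nlinarith [mul_le_mul_of_nonneg_left h1 hux]
      have := hode x hx0
      have : deriv u x ≤ -K * u x + (K/2) * u x := by linarith
      linarith
  -- invariance: u stays below B for all t ≥ 0
  have inv : ∀ t, 0 ≤ t → u t < B := by
    by_contra h
    push_neg at h
    obtain ⟨t, ht, htB⟩ := h
    set S : Set ℝ := Ici 0 ∩ u ⁻¹' Ici B with hS
    have hne : S.Nonempty := ⟨t, ht, htB⟩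
    have hbdd : BddBelow S := ⟨0, fun x hx => hx.1⟩
    have hcl : IsClosed S :=
      isClosed_Ici.inter (isClosed_Ici.preimage hdiff.continuous)
    have hmem : sInf S ∈ S := hcl.csInf_mem hne hbdd
    set t₀ := sInf S with ht₀
    have ht₀0 : 0 ≤ t₀ := hmem.1
    have ht₀B : B ≤ u t₀ := hmem.2
    have hlt : ∀ x ∈ Ico (0:ℝ) t₀, u x < B := by
      intro x hx
      by_contra hge
      push_neg at hge
      have : t₀ ≤ x := csInf_le hbdd ⟨hx.1, hge⟩
      exact absurd this (not_le.2 hx.2)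
    have := key t₀ hlt t₀ ⟨ht₀0, le_rfl⟩
    have hexp : Real.exp (-(K/2) * (t₀ - 0)) ≤ 1 := by
      rw [Real.exp_le_one_iff]
      nlinarith
    have hu0 : 0 ≤ u 0 := hnonneg 0 le_rfl
    nlinarith [Real.exp_pos (-(K/2) * (t₀ - 0))]
  intro t ht
  have := key t (fun x hx => inv x hx.1) t ⟨ht, le_rfl⟩
  have heq : -(K/2) * (t - 0) = -K * t / 2 := by ring
  rwa [heq] at this
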